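/- arXiv:2003.04076 — 2 statements merged into one kernel-verified Lean document; each statement's English description precedes it below -/
import Mathlib

section
/- Let A be a finite set of integers with min 0, max b, gcd 1, and fix 1 ≤ a ≤ b-1. If N_{a,A} > b/2, then there is an integer h with 1 ≤ h ≤ b-1, gcd(h,b) = 1, h ∈ A, such that n_{a,A} = N_{a,A}·h; moreover for every k ∈ A with k ≠ h and k ≠ 0, the least positive residue of k·h^{-1} mod b is at least N_{a,A} + 1. -/
/-- The `N`-fold sumset of a set of integers. -/
def nfold (A : Set ℤ) (N : ℕ) : Set ℤ :=
  {x | ∃ f : Fin N → ℤ, (∀ i, f i ∈ A) ∧ ∑ i, f i = x}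

/-- Nonnegative integer combinations of the elements of a finite set of integers. -/
def combos (A : Finset ℤ) : Set ℤ :=
  {n | ∃ c : ℤ → ℕ, ∑ a ∈ A, (c a : ℤ) * a = n}

lemma combos_add {A : Finset ℤ} {m n : ℤ} (hm : m ∈ combos A) (hn : n ∈ combos A) :
    m + n ∈ combos A := by
  obtain ⟨c1, h1⟩ := hm
  obtain ⟨c2, h2⟩ := hn
  exact ⟨c1 + c2, by simp [add_mul, Finset.sum_add_distrib, h1, h2]⟩

lemma zero_mem_combos (A : Finset ℤ) : 0 ∈ combos A := ⟨fun _ => 0, by simp⟩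

lemma mem_combos_of_mem {A : Finset ℤ} {k : ℤ} (hk : k ∈ A) : k ∈ combos A := by
  refine ⟨fun z => if z = k then 1 else 0, ?_⟩
  have h : ∀ a ∈ A, ((if a = k then (1:ℕ) else 0 : ℕ) : ℤ) * a = if a = k then k else 0 := by
    intro a _
    split <;> simp_all
  rw [Finset.sum_congr rfl h, Finset.sum_ite_eq' A k (fun _ => k)]
  simp [hk]

lemma sum_mem_combos {A : Finset ℤ} {ι : Type*} (S : Finset ι) (f : ι → ℤ)
    (hf : ∀ i ∈ S, f i ∈ A) : (∑ i ∈ S, f i) ∈ combos A := by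
  induction S using Finset.cons_induction with
  | empty => simpa using zero_mem_combos A
  | cons i S hi ih =>
    rw [Finset.sum_cons]
    exact combos_add (mem_combos_of_mem (hf i (Finset.mem_cons_self i S)))
      (ih fun j hj => hf j (Finset.mem_cons_of_mem hj))

lemma sum_mem_nfold {A : Set ℤ} {ι : Type*} (S : Finset ι) (f : ι → ℤ)
    (hf : ∀ i ∈ S, f i ∈ A) : (∑ i ∈ S, f i) ∈ nfold A S.card := by
  refine ⟨fun t => f (S.equivFin.symm t), fun t => hf _ (S.equivFin.symm t).2, ?_⟩
  rw [← Equiv.sum_comp S.equivFin (fun t => f (S.equivFin.symm t))]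
  simp [Finset.sum_attach]

lemma nfold_add {A : Set ℤ} {u v : ℤ} {p q : ℕ} (hu : u ∈ nfold A p) (hv : v ∈ nfold A q) :
    u + v ∈ nfold A (p + q) := by
  obtain ⟨f1, hf1, hs1⟩ := hu
  obtain ⟨f2, hf2, hs2⟩ := hv
  refine ⟨Fin.append f1 f2, ?_, ?_⟩
  · intro i
    refine Fin.addCases (fun i => ?_) (fun i => ?_) i
    · rw [Fin.append_left]; exact hf1 i
    · rw [Fin.append_right]; exact hf2 i
  · rw [Fin.sum_univ_add]
    simp [hs1, hs2]

lemma card_filter_lt (N k : ℕ) (h : k ≤ N) :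
    (Finset.univ.filter (fun t : Fin N => (t : ℕ) < k)).card = k := by
  have heq : Finset.univ.filter (fun t : Fin N => (t : ℕ) < k)
      = (Finset.univ : Finset (Fin k)).map (Fin.castLEEmb h) := by
    ext t
    simp only [Finset.mem_filter, Finset.mem_map, Finset.mem_univ, true_and]
    constructor
    · intro ht
      exact ⟨⟨t, ht⟩, by simp [Fin.castLEEmb, Fin.ext_iff]⟩
    · rintro ⟨s, rfl⟩
      simpa [Fin.castLEEmb] using s.isLt
  rw [heq, Finset.card_map, Finset.card_univ, Fintype.card_fin]

lemma key {A : Finset ℤ} {b a na : ℤ} {Na : ℕ}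
    (hbound : ∀ x ∈ A, 0 ≤ x ∧ x ≤ b)
    (hna : IsLeast {n : ℤ | 0 ≤ n ∧ n ≡ a [ZMOD b] ∧ n ∈ combos A} na)
    (hNa : IsLeast {N : ℕ | na ∈ nfold (↑A) N} Na)
    (x : Fin Na → ℤ) (hx : ∀ i, x i ∈ A) (hsum : ∑ i, x i = na) :
    ∀ S T : Finset (Fin Na), (∑ i ∈ S, x i) ≡ (∑ i ∈ T, x i) [ZMOD b] →
      (∑ i ∈ S, x i) = (∑ i ∈ T, x i) ∧ S.card = T.card := by
  have hxA : ∀ (S : Finset (Fin Na)), (∀ i ∈ S, x i ∈ A) := fun S i _ => hx i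
  have half : ∀ S T : Finset (Fin Na),
      (∑ i ∈ S, x i) ≡ (∑ i ∈ T, x i) [ZMOD b] → (∑ i ∈ T, x i) ≤ ∑ i ∈ S, x i := by
    intro S T hST
    have hcompl : (∑ i ∈ Tᶜ, x i) = na - ∑ i ∈ T, x i := by
      have := Finset.sum_add_sum_compl T x
      rw [hsum] at this
      linarith
    have hc : (∑ i ∈ Tᶜ, x i) + (∑ i ∈ S, x i) ∈ combos A :=
      combos_add (sum_mem_combos _ x (hxA _)) (sum_mem_combos _ x (hxA _))
    have hnn : 0 ≤ (∑ i ∈ Tᶜ, x i) + (∑ i ∈ S, x i) := by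
      have h1 : 0 ≤ ∑ i ∈ Tᶜ, x i := Finset.sum_nonneg fun i _ => (hbound _ (hx i)).1
      have h2 : 0 ≤ ∑ i ∈ S, x i := Finset.sum_nonneg fun i _ => (hbound _ (hx i)).1
      linarith
    have hmod : (∑ i ∈ Tᶜ, x i) + (∑ i ∈ S, x i) ≡ a [ZMOD b] := by
      have h1 : (∑ i ∈ Tᶜ, x i) + (∑ i ∈ S, x i) ≡ (∑ i ∈ Tᶜ, x i) + (∑ i ∈ T, x i) [ZMOD b] :=
        Int.ModEq.add_left _ hST
      have h2 : (∑ i ∈ Tᶜ, x i) + (∑ i ∈ T, x i) = na := by rw [hcompl]; ring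
      rw [h2] at h1
      exact h1.trans hna.1.2.1
    have hle := hna.2 ⟨hnn, hmod, hc⟩
    rw [hcompl] at hle
    linarith
  intro S T hST
  have hval : (∑ i ∈ S, x i) = (∑ i ∈ T, x i) := le_antisymm (half T S hST.symm) (half S T hST)
  refine ⟨hval, ?_⟩
  have halfc : ∀ S T : Finset (Fin Na), (∑ i ∈ S, x i) = (∑ i ∈ T, x i) → T.card ≤ S.card := by
    intro S T hST
    have hcompl : (∑ i ∈ Tᶜ, x i) + (∑ i ∈ S, x i) = na := by
      have := Finset.sum_add_sum_compl T x
      rw [hsum] at this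
      linarith [hST]
    have hmem : na ∈ nfold (↑A : Set ℤ) (Tᶜ.card + S.card) := by
      rw [← hcompl]
      exact nfold_add (sum_mem_nfold _ x fun i _ => hx i) (sum_mem_nfold _ x fun i _ => hx i)
    have hle := hNa.2 hmem
    have hTc : Tᶜ.card = Na - T.card := by
      rw [Finset.card_compl, Fintype.card_fin]
    have hTle : T.card ≤ Na := by
      simpa using Finset.card_le_univ T
    omega
  exact le_antisymm (halfc T S hval.symm) (halfc S T hval)

lemma all_eq {b : ℤ} {Na : ℕ} (x : Fin Na → ℤ)
    (hb2 : 2 ≤ b) (hbig : b < 2 * (Na : ℤ))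
    (key : ∀ S T : Finset (Fin Na), (∑ i ∈ S, x i) ≡ (∑ i ∈ T, x i) [ZMOD b] →
      (∑ i ∈ S, x i) = (∑ i ∈ T, x i) ∧ S.card = T.card)
    (card_filter_lt : ∀ (k : ℕ), k ≤ Na →
      (Finset.univ.filter (fun t : Fin Na => (t : ℕ) < k)).card = k) :
    ∀ i j, x i = x j := by
  by_contra hc
  push_neg at hc
  obtain ⟨i, j, hij⟩ := hc
  have hijne : i ≠ j := fun h => hij (by rw [h])
  have hN2 : 2 ≤ Na := by
    by_contra hN
    interval_cases Na <;> omega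
  set m := b.toNat with hm
  have hm2 : 2 ≤ m := by omega
  haveI : NeZero m := ⟨by omega⟩
  have hmb : (m : ℤ) = b := Int.toNat_of_nonneg (by omega)
  set z : Fin Na := ⟨0, by omega⟩ with hz
  set w : Fin Na := ⟨Na - 1, by omega⟩ with hw
  have hzw : z ≠ w := by
    intro h
    rw [hz, hw, Fin.mk.injEq] at h
    omega
  set s1 := Equiv.swap z i with hs1
  set j' := s1.symm j with hj'
  have hs1j' : s1 j' = j := Equiv.apply_symm_apply _ _
  have hj'z : j' ≠ z := by
    intro h
    rw [h] at hs1j'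
    rw [hs1, Equiv.swap_apply_left] at hs1j'
    exact hijne hs1j'
  set s2 := Equiv.swap w j' with hs2
  set e : Fin Na ≃ Fin Na := s2.trans s1 with he
  have hez : e z = i := by
    have h2 : s2 z = z := Equiv.swap_apply_of_ne_of_ne hzw (Ne.symm hj'z)
    simp only [he, Equiv.trans_apply, h2, hs1, Equiv.swap_apply_left]
  have hew : e w = j := by
    simp only [he, Equiv.trans_apply, hs2, Equiv.swap_apply_left, hs1j']
  -- sets
  set Sf : ℕ → Finset (Fin Na) :=
    fun k => (Finset.univ.filter (fun t : Fin Na => (t : ℕ) < k)).image e with hSf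
  have hScard : ∀ k ≤ Na, (Sf k).card = k := by
    intro k hk
    rw [hSf]
    rw [Finset.card_image_of_injective _ e.injective, card_filter_lt k hk]
  have hiS : ∀ k, 0 < k → i ∈ Sf k := by
    intro k hk
    rw [hSf]
    exact Finset.mem_image.2 ⟨z, Finset.mem_filter.2 ⟨Finset.mem_univ _, by simp [hz, hk]⟩, hez⟩
  have hjS : ∀ k, k ≤ Na - 1 → j ∉ Sf k := by
    intro k hk hmem
    rw [hSf] at hmem
    obtain ⟨t, ht, het⟩ := Finset.mem_image.1 hmem
    have : t = w := e.injective (by rw [het, hew])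
    rw [this] at ht
    have := (Finset.mem_filter.1 ht).2
    simp only [hw] at this
    omega
  set Tf : ℕ → Finset (Fin Na) := fun k => insert j ((Sf k).erase i) with hTf
  have hTcard : ∀ k, 1 ≤ k → k ≤ Na - 1 → (Tf k).card = k := by
    intro k h1 h2
    rw [hTf]
    rw [Finset.card_insert_of_notMem (fun h => hjS k h2 (Finset.mem_of_mem_erase h)),
      Finset.card_erase_of_mem (hiS k h1), hScard k (by omega)]
    omega
  have hTsum : ∀ k, 1 ≤ k → k ≤ Na - 1 →
      (∑ t ∈ Tf k, x t) = x j + ((∑ t ∈ Sf k, x t) - x i) := by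
    intro k h1 h2
    rw [hTf, Finset.sum_insert (fun h => hjS k h2 (Finset.mem_of_mem_erase h)),
      Finset.sum_erase_eq_sub (hiS k h1)]
  -- the injection
  set Φ : ℕ × Bool → ZMod m := fun p =>
    if p.2 then ((∑ t ∈ Tf p.1, x t : ℤ) : ZMod m) else ((∑ t ∈ Sf p.1, x t : ℤ) : ZMod m)
    with hΦ
  set D : Finset (ℕ × Bool) :=
    (Finset.range (Na + 1)) ×ˢ ({false} : Finset Bool)
      ∪ (Finset.Icc 1 (Na - 1)) ×ˢ ({true} : Finset Bool) with hD
  have hDmem : ∀ p ∈ D, (p.2 = false ∧ p.1 ≤ Na) ∨ (p.2 = true ∧ 1 ≤ p.1 ∧ p.1 ≤ Na - 1) := by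
    intro p hp
    rcases Finset.mem_union.1 hp with h | h
    · obtain ⟨h1, h2⟩ := Finset.mem_product.1 h
      left
      have := Finset.mem_range.1 h1
      exact ⟨Finset.mem_singleton.1 h2, by omega⟩
    · obtain ⟨h1, h2⟩ := Finset.mem_product.1 h
      right
      exact ⟨Finset.mem_singleton.1 h2, (Finset.mem_Icc.1 h1).1, (Finset.mem_Icc.1 h1).2⟩
  -- cardinality of D
  have hDcard : D.card = 2 * Na := by
    rw [hD, Finset.card_union_of_disjoint, Finset.card_product, Finset.card_product,
      Finset.card_range, Nat.card_Icc, Finset.card_singleton, Finset.card_singleton]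
    · omega
    · rw [Finset.disjoint_left]
      rintro ⟨k, s⟩ h1 h2
      have e1 := Finset.mem_singleton.1 (Finset.mem_product.1 h1).2
      have e2 := Finset.mem_singleton.1 (Finset.mem_product.1 h2).2
      simp at e1 e2
      rw [e1] at e2
      exact Bool.false_ne_true e2
  -- injectivity
  have hΦS : ∀ k, Φ (k, false) = ((∑ t ∈ Sf k, x t : ℤ) : ZMod m) := fun k => by simp [hΦ]
  have hΦT : ∀ k, Φ (k, true) = ((∑ t ∈ Tf k, x t : ℤ) : ZMod m) := fun k => by simp [hΦ]
  have hmodeq : ∀ U V : Finset (Fin Na),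
      ((∑ t ∈ U, x t : ℤ) : ZMod m) = ((∑ t ∈ V, x t : ℤ) : ZMod m) →
      (∑ t ∈ U, x t) = (∑ t ∈ V, x t) ∧ U.card = V.card := by
    intro U V hc
    apply key
    have := (ZMod.intCast_eq_intCast_iff _ _ m).1 hc
    rwa [hmb] at this
  have hinj : Set.InjOn Φ (D : Set (ℕ × Bool)) := by
    rintro ⟨k, s⟩ hp ⟨k', s'⟩ hq hpq
    have hp' := hDmem _ (by simpa using hp)
    have hq' := hDmem _ (by simpa using hq)
    cases s <;> cases s' <;> simp only [Bool.false_eq_true, Bool.true_eq_false, false_and,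
      and_false, true_and, and_true, or_false, false_or] at hp' hq'
    · -- false false
      rw [hΦS, hΦS] at hpq
      obtain ⟨hv, hcards⟩ := hmodeq _ _ hpq
      rw [hScard k hp', hScard k' hq'] at hcards
      rw [hcards]
    · -- false true
      exfalso
      rw [hΦS, hΦT] at hpq
      obtain ⟨hv, hcards⟩ := hmodeq _ _ hpq
      rw [hTsum k' hq'.1 hq'.2] at hv
      rw [hScard k hp', hTcard k' hq'.1 hq'.2] at hcards
      subst hcards
      exact hij (by linarith)
    · -- true false
      exfalso
      rw [hΦT, hΦS] at hpq
      obtain ⟨hv, hcards⟩ := hmodeq _ _ hpq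
      rw [hTsum k hp'.1 hp'.2] at hv
      rw [hTcard k hp'.1 hp'.2, hScard k' hq'] at hcards
      subst hcards
      exact hij (by linarith)
    · -- true true
      rw [hΦT, hΦT] at hpq
      obtain ⟨hv, hcards⟩ := hmodeq _ _ hpq
      rw [hTcard k hp'.1 hp'.2, hTcard k' hq'.1 hq'.2] at hcards
      rw [hcards]
  have hle := Finset.card_le_card_of_injOn Φ (fun p _ => Finset.mem_univ (Φ p)) hinj
  rw [hDcard, Finset.card_univ, ZMod.card] at hle
  have hfin : (2 * Na : ℤ) ≤ (m : ℤ) := by exact_mod_cast hle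
  rw [hmb] at hfin
  omega

/-- If `N_{a,A} > b/2` then `n_{a,A} = N_{a,A}·h` for some
`h ∈ A` with `1 ≤ h ≤ b-1` and `gcd(h,b) = 1`; moreover for every `k ∈ A`
with `k ≠ h`, `k ≠ 0`, the least positive residue of `k·h⁻¹ (mod b)` (i.e.
the unique `l ∈ [1,b]` with `l·h ≡ k (mod b)`) is at least `N_{a,A} + 1`. -/
theorem stmt12 (A : Finset ℤ) (b : ℤ) (h0 : 0 ∈ A) (hb : b ∈ A)
    (hbound : ∀ x ∈ A, 0 ≤ x ∧ x ≤ b) (hgcd : A.gcd id = 1)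
    (a : ℤ) (ha1 : 1 ≤ a) (hab : a ≤ b - 1)
    (na : ℤ) (hna : IsLeast {n : ℤ | 0 ≤ n ∧ n ≡ a [ZMOD b] ∧ n ∈ combos A} na)
    (Na : ℕ) (hNa : IsLeast {N : ℕ | na ∈ nfold (↑A) N} Na)
    (hbig : b < 2 * (Na : ℤ)) :
    ∃ h : ℤ, 1 ≤ h ∧ h ≤ b - 1 ∧ Int.gcd h b = 1 ∧ h ∈ A ∧
      na = (Na : ℤ) * h ∧
      ∀ k ∈ A, k ≠ h → k ≠ 0 →
        ∀ l : ℤ, 1 ≤ l → l ≤ b → l * h ≡ k [ZMOD b] → (Na : ℤ) + 1 ≤ l := by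
  have hb2 : 2 ≤ b := by omega
  have hN2 : 2 ≤ Na := by omega
  obtain ⟨x, hxA', hsum⟩ := hNa.1
  have hxA : ∀ i, x i ∈ A := fun i => hxA' i
  have hkey := key hbound hna hNa x hxA hsum
  have hallEq : ∀ i j, x i = x j :=
    all_eq x hb2 hbig hkey (fun k hk => card_filter_lt Na k hk)
  set h := x ⟨0, by omega⟩ with hh
  have hhA : h ∈ A := hxA _
  have hxh : ∀ i, x i = h := fun i => hallEq i _
  have hnah : na = (Na : ℤ) * h := by
    rw [← hsum, Finset.sum_congr rfl (fun i _ => hxh i), Finset.sum_const, Finset.card_univ,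
      Fintype.card_fin, nsmul_eq_mul]
  -- sums over prefixes are multiples of h
  have hsumF : ∀ k : ℕ, k ≤ Na →
      (∑ t ∈ Finset.univ.filter (fun t : Fin Na => (t : ℕ) < k), x t) = (k : ℤ) * h := by
    intro k hk
    rw [Finset.sum_congr rfl (fun i _ => hxh i), Finset.sum_const, card_filter_lt Na k hk,
      nsmul_eq_mul]
  have hmult : ∀ k k' : ℕ, k ≤ Na → k' ≤ Na →
      ((k : ℤ) * h ≡ (k' : ℤ) * h [ZMOD b]) → k = k' := by
    intro k k' hk hk' hcong
    have h1 := hsumF k hk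
    have h2 := hsumF k' hk'
    have := (hkey (Finset.univ.filter (fun t : Fin Na => (t : ℕ) < k))
      (Finset.univ.filter (fun t : Fin Na => (t : ℕ) < k')) (by rw [h1, h2]; exact hcong)).2
    rwa [card_filter_lt Na k hk, card_filter_lt Na k' hk'] at this
  have hh0 : 0 ≤ h := (hbound h hhA).1
  have hh1 : 1 ≤ h := by
    rcases eq_or_lt_of_le hh0 with heq | hlt
    · exfalso
      have hc : ((1 : ℕ) : ℤ) * h ≡ ((0 : ℕ) : ℤ) * h [ZMOD b] := by
        rw [← heq]
        simp
      have := hmult 1 0 (by omega) (by omega) hc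
      omega
    · omega
  have hhb : h ≤ b - 1 := by
    have hhle : h ≤ b := (hbound h hhA).2
    rcases eq_or_lt_of_le hhle with heq | hlt
    · exfalso
      have hc : ((1 : ℕ) : ℤ) * h ≡ ((0 : ℕ) : ℤ) * h [ZMOD b] := by
        rw [heq]
        simp [Int.modEq_zero_iff_dvd]
      have := hmult 1 0 (by omega) (by omega) hc
      omega
    · omega
  have hgcd1 : Int.gcd h b = 1 := by
    by_contra hg
    have hgne : Int.gcd h b ≠ 0 := by
      intro hzero
      rw [Int.gcd_eq_zero_iff] at hzero
      omega
    have hd2 : 2 ≤ (Int.gcd h b : ℤ) := by omega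
    set d : ℤ := (Int.gcd h b : ℤ) with hd
    have hdh : d ∣ h := Int.gcd_dvd_left h b
    have hdb : d ∣ b := Int.gcd_dvd_right h b
    obtain ⟨bd, hbd⟩ := hdb
    have hbd1 : 1 ≤ bd := by nlinarith
    have hbdNa : bd < (Na : ℤ) := by nlinarith
    set e := bd.toNat with he
    have hee : (e : ℤ) = bd := Int.toNat_of_nonneg (by omega)
    obtain ⟨hq, hhq⟩ := hdh
    have hcong : ((e : ℕ) : ℤ) * h ≡ ((0 : ℕ) : ℤ) * h [ZMOD b] := by
      rw [Int.modEq_iff_dvd]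
      refine ⟨-hq, ?_⟩
      rw [hee, hhq, hbd]
      ring
    have := hmult e 0 (by omega) (by omega) hcong
    omega
  refine ⟨h, hh1, hhb, hgcd1, hhA, hnah, ?_⟩
  -- final bullet
  have hrep : ∀ (t : ℕ) (u v : ℤ), u ∈ A → v ∈ A →
      ((t : ℤ) * u + v) ∈ nfold (↑A) (t + 1) ∧ ((t : ℤ) * u + v) ∈ combos A := by
    intro t u v hu hv
    have hf : ∀ i : Fin (t + 1), (Fin.snoc (fun _ : Fin t => u) v : Fin (t+1) → ℤ) i ∈ A := by
      intro i
      refine Fin.lastCases ?_ (fun i => ?_) i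
      · rw [Fin.snoc_last]; exact hv
      · rw [Fin.snoc_castSucc]; exact hu
    have hsnoc : ∑ i, (Fin.snoc (fun _ : Fin t => u) v : Fin (t+1) → ℤ) i = (t : ℤ) * u + v := by
      rw [Fin.sum_univ_castSucc]
      simp [Fin.snoc_castSucc, Fin.snoc_last, mul_comm]
    constructor
    · exact ⟨_, fun i => hf i, hsnoc⟩
    · have := sum_mem_combos Finset.univ _ (fun i _ => hf i)
      rwa [hsnoc] at this
  intro k hkA hkh hk0 l hl1 hlb hmod
  by_contra hcon
  push_neg at hcon
  have hlNa : l ≤ (Na : ℤ) := by omega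
  set t := ((Na : ℤ) - l).toNat with ht
  have htl : (t : ℤ) = (Na : ℤ) - l := Int.toNat_of_nonneg (by omega)
  obtain ⟨hnf, hcomb⟩ := hrep t h k hhA hkA
  have hth : (t : ℤ) * h = (Na : ℤ) * h - l * h := by rw [htl]; ring
  have hmod2 : (t : ℤ) * h + k ≡ a [ZMOD b] := by
    have h1 : (t : ℤ) * h + k ≡ (t : ℤ) * h + l * h [ZMOD b] := Int.ModEq.add_left _ hmod.symm
    have h2 : (t : ℤ) * h + l * h = na := by rw [hnah, htl]; ring
    rw [h2] at h1
    exact h1.trans hna.1.2.1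
  have hnn : 0 ≤ (t : ℤ) * h + k :=
    add_nonneg (mul_nonneg (by positivity) hh0) (hbound k hkA).1
  have hle := hna.2 ⟨hnn, hmod2, hcomb⟩
  have hlh_le : l * h ≤ k := by
    rw [hnah] at hle
    linarith [hth]
  have hdvd : b ∣ k - l * h := hmod.dvd
  have hk_eq : k = l * h := by
    have h1 : 0 ≤ k - l * h := by linarith
    have h2 : k - l * h < b := by
      have hkb := (hbound k hkA).2
      have hlh1 : 1 ≤ l * h := by nlinarith
      linarith
    have h3 : (k - l * h) % b = k - l * h := Int.emod_eq_of_lt h1 h2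
    have h4 : (k - l * h) % b = 0 := Int.emod_eq_zero_of_dvd hdvd
    omega
  have hmem2 : na ∈ nfold (↑A) (t + 1) := by
    have heq : na = (t : ℤ) * h + k := by
      rw [hnah, hk_eq, htl]; ring
    rw [heq]
    exact hnf
  have hNle := hNa.2 hmem2
  have hNle' : (Na : ℤ) ≤ (t : ℤ) + 1 := by exact_mod_cast hNle
  have hl_eq1 : l = 1 := by omega
  rw [hl_eq1, one_mul] at hk_eq
  exact hkh hk_eq
end

section
/- Let 0 ∈ A ⊂ ℤ^n with ⟨A⟩_ℤ = ℤ^n. Then there exists N_A such that for all N ≥ N_A, NA = (N·H(A) ∩ ℤ^n) \ (E(A) ∪ ⋃_{a∈A}(Na - E(a-A))), where E(S) := (C_S ∩ ℤ^n) \ P(S), C_S is the cone of nonnegative real combinations of S, and H(A) is the convex hull of A. -/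
open Pointwise

/-- The `N`-fold sumset of a set of integer vectors. -/
def nfoldV {n : ℕ} (A : Set (Fin n → ℤ)) (N : ℕ) : Set (Fin n → ℤ) :=
  {x | ∃ f : Fin N → (Fin n → ℤ), (∀ i, f i ∈ A) ∧ ∑ i, f i = x}

/-- Nonnegative integer combinations of the elements of a finite set of vectors. -/
def PV {n : ℕ} (A : Finset (Fin n → ℤ)) : Set (Fin n → ℤ) :=
  {x | ∃ c : (Fin n → ℤ) → ℕ, ∑ a ∈ A, (c a : ℤ) • a = x}

/-- Coordinatewise cast of an integer vector to a real vector. -/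
def castVec {n : ℕ} (v : Fin n → ℤ) : Fin n → ℝ := fun i => (v i : ℝ)

/-- The cone of nonnegative real combinations of a finite set of integer vectors. -/
def coneV {n : ℕ} (A : Finset (Fin n → ℤ)) : Set (Fin n → ℝ) :=
  {x | ∃ c : (Fin n → ℤ) → ℝ, (∀ a ∈ A, 0 ≤ c a) ∧ ∑ a ∈ A, c a • castVec a = x}

/-- The exceptional set: lattice points of the cone not representable. -/
def EV {n : ℕ} (A : Finset (Fin n → ℤ)) : Set (Fin n → ℤ) :=
  {x | castVec x ∈ coneV A ∧ x ∉ PV A}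


-- Dickson-type lemma
lemma dickson {ι : Type*} [Fintype ι] (Z : Set (ι → ℕ)) :
    ∃ K : ℕ, ∀ z ∈ Z, ∃ z' ∈ Z, z' ≤ z ∧ ∀ i, z' i ≤ K := by
  classical
  set M : Set (ι → ℕ) := {z | z ∈ Z ∧ ∀ w ∈ Z, w ≤ z → w = z} with hM
  have hdom : ∀ (k : ℕ) (z), z ∈ Z → (∑ i, z i) ≤ k → ∃ z' ∈ M, z' ≤ z := by
    intro k
    induction k with
    | zero =>
      intro z hz hk
      have hz0 : ∀ i, z i = 0 := by
        intro i
        have := Finset.sum_eq_zero_iff.mp (Nat.le_zero.mp hk)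
        exact this i (Finset.mem_univ i)
      refine ⟨z, ⟨hz, ?_⟩, le_refl z⟩
      intro w hw hwz
      funext i
      have h1 : w i ≤ z i := hwz i
      have h2 : z i = 0 := hz0 i
      omega
    | succ k ih =>
      intro z hz hk
      by_cases hmin : ∀ w ∈ Z, w ≤ z → w = z
      · exact ⟨z, ⟨hz, hmin⟩, le_refl z⟩
      · push_neg at hmin
        obtain ⟨w, hwZ, hwle, hwne⟩ := hmin
        have hlt : ∑ i, w i < ∑ i, z i := by
          obtain ⟨i0, hi0⟩ : ∃ i, w i ≠ z i := by
            by_contra h; push_neg at h; exact hwne (funext h)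
          exact Finset.sum_lt_sum (fun i _ => hwle i)
            ⟨i0, Finset.mem_univ _, lt_of_le_of_ne (hwle i0) hi0⟩
        obtain ⟨z', hz'M, hle⟩ := ih w hwZ (by omega)
        exact ⟨z', hz'M, le_trans hle hwle⟩
  have hMfin : M.Finite := by
    by_contra hinf
    have u := Set.Infinite.natEmbedding M hinf
    have hpwo : M.IsPWO := (Set.IsPWO.pi (s := fun (_ : ι) => (Set.univ : Set ℕ))
      (fun _ => Set.isPWO_univ_iff.mpr inferInstance)).mono (fun x _ => by simp)
    obtain ⟨i, j, hij, hle⟩ := hpwo (fun k => u k)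
    have heq : (u i : ι → ℕ) = (u j : ι → ℕ) := (u j).2.2 _ (u i).2.1 hle
    exact absurd (u.injective (Subtype.ext heq)) (Nat.ne_of_lt hij)
  refine ⟨hMfin.toFinset.sup fun z => Finset.univ.sup z, ?_⟩
  intro z hz
  obtain ⟨z', hz'M, hle⟩ := hdom (∑ i, z i) z hz le_rfl
  exact ⟨z', hz'M.1, hle, fun i =>
    le_trans (Finset.le_sup (Finset.mem_univ i))
      (Finset.le_sup (f := fun z => Finset.univ.sup z) (hMfin.mem_toFinset.2 hz'M))⟩

-- counts → nfold
lemma mem_nfold_of_count {n : ℕ} (A : Finset (Fin n → ℤ)) :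
    ∀ (N : ℕ) (c : (Fin n → ℤ) → ℕ), (∑ a ∈ A, c a) = N →
      (∑ a ∈ A, (c a : ℤ) • a) ∈ nfoldV (↑A) N := by
  classical
  intro N
  induction N with
  | zero =>
    intro c hc
    refine ⟨Fin.elim0, fun i => i.elim0, ?_⟩
    rw [Finset.univ_eq_empty, Finset.sum_empty]
    symm
    refine Finset.sum_eq_zero ?_
    intro a ha
    have := Finset.sum_eq_zero_iff.mp hc a ha
    simp [this]
  | succ N ih =>
    intro c hc
    have hex : ∃ a ∈ A, c a ≠ 0 := by
      by_contra h
      push_neg at h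
      rw [Finset.sum_eq_zero h] at hc
      omega
    obtain ⟨a₀, ha₀, hca₀⟩ := hex
    set c' := Function.update c a₀ (c a₀ - 1) with hc'
    have hsplit := Finset.sum_eq_add_sum_sdiff_singleton_of_mem ha₀ c
    have hc'sum : ∑ a ∈ A, c' a = N := by
      rw [hc', Finset.sum_update_of_mem ha₀]
      omega
    obtain ⟨f', hf'mem, hf'sum⟩ := ih c' hc'sum
    refine ⟨Fin.cons a₀ f', ?_, ?_⟩
    · intro i
      refine Fin.cases ?_ ?_ i
      · exact ha₀
      · exact fun j => hf'mem j
    · rw [Fin.sum_cons, hf'sum]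
      have hupd : (fun a => (c' a : ℤ) • a) =
          Function.update (fun a => (c a : ℤ) • a) a₀ (((c a₀ - 1 : ℕ) : ℤ) • a₀) := by
        funext a
        rw [hc']
        exact Function.apply_update (fun a (k : ℕ) => (k : ℤ) • a) c a₀ (c a₀ - 1) a
      calc a₀ + ∑ a ∈ A, (c' a : ℤ) • a
          = a₀ + (((c a₀ - 1 : ℕ) : ℤ) • a₀ + ∑ a ∈ A \ {a₀}, (c a : ℤ) • a) := by
            rw [hupd, Finset.sum_update_of_mem ha₀]
        _ = ∑ a ∈ A, (c a : ℤ) • a := by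
            rw [Finset.sum_eq_add_sum_sdiff_singleton_of_mem ha₀ (fun a => (c a : ℤ) • a)]
            have h1 : ((c a₀ - 1 : ℕ) : ℤ) = (c a₀ : ℤ) - 1 := by
              have : 1 ≤ c a₀ := Nat.one_le_iff_ne_zero.mpr hca₀
              push_cast [this]; ring
            rw [h1, sub_smul, one_smul]
            abel

-- fun → counts
lemma counts_of_fun {n : ℕ} (S : Finset (Fin n → ℤ)) (N : ℕ) (f : Fin N → (Fin n → ℤ))
    (hf : ∀ i, f i ∈ S) :
    ∃ c : (Fin n → ℤ) → ℕ, ∑ a ∈ S, c a = N ∧ ∑ a ∈ S, (c a : ℤ) • a = ∑ i, f i := by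
  classical
  refine ⟨fun a => (Finset.univ.filter (fun i => f i = a)).card, ?_, ?_⟩
  · have := Finset.card_eq_sum_card_fiberwise (s := (Finset.univ : Finset (Fin N)))
      (t := S) (f := f) (fun i _ => hf i)
    simpa using this.symm
  · rw [← Finset.sum_fiberwise_of_maps_to (fun i (_ : i ∈ Finset.univ) => hf i) f]
    refine Finset.sum_congr rfl ?_
    intro a _
    rw [natCast_zsmul]
    rw [Finset.sum_congr rfl (fun i hi => (Finset.mem_filter.mp hi).2), Finset.sum_const]

-- castVec lemmas
lemma castVec_sub {n : ℕ} (a b : Fin n → ℤ) : castVec (a - b) = castVec a - castVec b := by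
  funext i; simp [castVec]

lemma castVec_sum {n : ℕ} {α : Type*} (s : Finset α) (g : α → (Fin n → ℤ)) :
    castVec (∑ i ∈ s, g i) = ∑ i ∈ s, castVec (g i) := by
  funext i
  simp [castVec, Finset.sum_apply]

lemma castVec_nsmul {n : ℕ} (N : ℕ) (a : Fin n → ℤ) :
    castVec (N • a) = (N : ℝ) • castVec a := by
  funext i
  simp [castVec]

lemma castVec_zsmul {n : ℕ} (k : ℤ) (a : Fin n → ℤ) :
    castVec (k • a) = (k : ℝ) • castVec a := by
  funext i
  simp [castVec]

lemma castVec_inj {n : ℕ} : Function.Injective (castVec (n := n)) := by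
  intro v w h
  funext i
  exact Int.cast_injective (congrFun h i)

/-- Theorem 2: For `0 ∈ A ⊂ ℤⁿ` generating `ℤⁿ`, there is `N_A`
such that for all `N ≥ N_A`,
`NA = (N·H(A) ∩ ℤⁿ) \ (E(A) ∪ ⋃_{a ∈ A} (N·a - E(a-A)))`. -/
theorem stmt18 (n : ℕ) (A : Finset (Fin n → ℤ)) (h0 : (0 : Fin n → ℤ) ∈ A)
    (hspan : Submodule.span ℤ (A : Set (Fin n → ℤ)) = ⊤) :
    ∃ NA : ℕ, ∀ N : ℕ, NA ≤ N →
      nfoldV (↑A) N =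
        {x : Fin n → ℤ |
            castVec x ∈ (N : ℝ) • convexHull ℝ (castVec '' (A : Set (Fin n → ℤ)))} \
          (EV A ∪ ⋃ a ∈ A, (fun e => N • a - e) '' EV (A.image (fun a' => a - a'))) := by
  classical
  have hAne : A.Nonempty := ⟨0, h0⟩
  have hcard_pos : 0 < A.card := Finset.card_pos.mpr hAne
  set C : Fin n → ℤ := fun i => ∑ p ∈ A, ∑ l ∈ A, |p i - l i| with hC
  set R₀ : Finset (Fin n → ℤ) := Finset.Icc (fun i => -C i) C with hR₀
  set Z : (Fin n → ℤ) → (Fin n → ℤ) → Set ((↥A × Bool) → ℕ) :=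
    fun a r =>
      {z | ∑ l ∈ A.attach, (((z (l, true)) : ℤ) - ((z (l, false)) : ℤ)) • (a - ↑l) = r}
    with hZ
  choose K hK using fun (a r : Fin n → ℤ) => dickson (Z a r)
  set Ktot : ℕ := A.sup (fun a => R₀.sup (K a)) with hKtot
  refine ⟨A.card * A.card * Ktot + 1, ?_⟩
  intro N hN
  have hN1 : 1 ≤ N := le_trans (Nat.le_add_left 1 _) hN
  have hNR : (0:ℝ) < (N:ℝ) := by exact_mod_cast hN1
  ext x
  constructor
  · rintro ⟨f, hf, rfl⟩
    refine ⟨?_, ?_⟩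
    · show castVec (∑ i, f i) ∈ (N:ℝ) • convexHull ℝ (castVec '' (A : Set (Fin n → ℤ)))
      have hz : (∑ i : Fin N, ((N:ℝ)⁻¹) • castVec (f i)) ∈
          convexHull ℝ (castVec '' (A : Set (Fin n → ℤ))) := by
        refine Convex.sum_mem (convex_convexHull ℝ _)
          (fun i _ => by positivity) ?_ ?_
        · rw [Finset.sum_const, Finset.card_univ, Fintype.card_fin, nsmul_eq_mul]
          field_simp
        · exact fun i _ => subset_convexHull ℝ _ ⟨f i, hf i, rfl⟩
      refine Set.mem_smul_set.mpr ⟨_, hz, ?_⟩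
      rw [Finset.smul_sum, castVec_sum]
      refine Finset.sum_congr rfl (fun i _ => ?_)
      rw [smul_smul, mul_inv_cancel₀ (ne_of_gt hNR), one_smul]
    · intro hmem
      rcases hmem with hmem | hmem
      · obtain ⟨c, _, hc2⟩ := counts_of_fun A N f (fun i => hf i)
        exact hmem.2 ⟨c, hc2⟩
      · obtain ⟨a, ha, hmem⟩ := Set.mem_iUnion₂.mp hmem
        obtain ⟨e, heEV, heq⟩ := hmem
        have hsum : ∑ i : Fin N, (a - f i) = N • a - ∑ i, f i := by
          rw [Finset.sum_sub_distrib, Finset.sum_const, Finset.card_univ, Fintype.card_fin]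
        have he' : e = ∑ i : Fin N, (a - f i) := by
          rw [hsum, ← heq]; exact (sub_sub_cancel _ _).symm
        obtain ⟨c, _, hc2⟩ := counts_of_fun (A.image (fun a' => a - a')) N
          (fun i => a - f i) (fun i => Finset.mem_image_of_mem _ (hf i))
        exact heEV.2 ⟨c, by rw [hc2, ← he']⟩
  · rintro ⟨hhull, hnot⟩
    obtain ⟨z, hzhull, hzx⟩ := Set.mem_smul_set.mp hhull
    rw [← Finset.coe_image (f := castVec)] at hzhull
    obtain ⟨w0, hw00, hw01, hw0c⟩ := Finset.mem_convexHull.mp hzhull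
    rw [Finset.centerMass_eq_of_sum_1 _ id hw01] at hw0c
    set w : (Fin n → ℤ) → ℝ := fun l => w0 (castVec l) with hw
    have hinjA : ∀ u ∈ A, ∀ v ∈ A, castVec u = castVec v → u = v :=
      fun u _ v _ h => castVec_inj h
    have hw1 : ∑ l ∈ A, w l = 1 := by
      rw [← hw01, Finset.sum_image hinjA]
    have hwz : ∑ l ∈ A, w l • castVec l = z := by
      rw [← hw0c, Finset.sum_image hinjA]
      simp [hw]
    have hw0 : ∀ l ∈ A, 0 ≤ w l := fun l hl => hw00 _ (Finset.mem_image_of_mem _ hl)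
    obtain ⟨a, ha, hamax⟩ := Finset.exists_max_image A w hAne
    set μ : (Fin n → ℤ) → ℝ := fun l => (N : ℝ) * w l with hμ
    have hμ0 : ∀ l ∈ A, 0 ≤ μ l := fun l hl => mul_nonneg (Nat.cast_nonneg N) (hw0 l hl)
    have hμsum : ∑ l ∈ A, μ l = (N : ℝ) := by
      rw [hμ, ← Finset.mul_sum, hw1, mul_one]
    have hwa : (1:ℝ) ≤ A.card * w a := by
      calc (1:ℝ) = ∑ l ∈ A, w l := hw1.symm
        _ ≤ A.card • w a := Finset.sum_le_card_nsmul A w (w a) (fun l hl => hamax l hl)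
        _ = A.card * w a := nsmul_eq_mul _ _
    have hμa : (N:ℝ) ≤ (A.card : ℝ) * μ a := by
      have h' := mul_le_mul_of_nonneg_left hwa (le_of_lt hNR)
      rw [mul_one] at h'
      show (N:ℝ) ≤ (A.card : ℝ) * ((N:ℝ) * w a)
      nlinarith [h']
    set Ba : Finset (Fin n → ℤ) := A.image (fun a' => a - a') with hBa
    set y : Fin n → ℤ := N • a - x with hy
    have hyreal : castVec y = ∑ l ∈ A, μ l • (castVec a - castVec l) := by
      rw [hy, castVec_sub, castVec_nsmul, ← hzx, ← hwz, Finset.smul_sum]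
      have hna : (N:ℝ) • castVec a = ∑ l ∈ A, μ l • castVec a := by
        rw [← Finset.sum_smul, hμsum]
      rw [hna, ← Finset.sum_sub_distrib]
      refine Finset.sum_congr rfl (fun l hl => ?_)
      rw [smul_smul, smul_sub, hμ]
    have hainjA : ∀ u ∈ A, ∀ v ∈ A, a - u = a - v → u = v :=
      fun u _ v _ h => by
        rw [← sub_sub_cancel a u, h, sub_sub_cancel]
    have hyPV : y ∈ PV Ba := by
      have hycone : castVec y ∈ coneV Ba := by
        refine ⟨fun v => (N:ℝ) * w (a - v), ?_, ?_⟩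
        · intro b hb
          obtain ⟨l, hl, rfl⟩ := Finset.mem_image.mp hb
          dsimp only
          rw [sub_sub_cancel]
          exact mul_nonneg (Nat.cast_nonneg N) (hw0 l hl)
        · rw [hBa, Finset.sum_image hainjA, hyreal]
          refine Finset.sum_congr rfl (fun l hl => ?_)
          dsimp only
          rw [sub_sub_cancel, castVec_sub]
      by_contra hyn
      refine hnot (Or.inr (Set.mem_iUnion₂.mpr ⟨a, ha, ⟨y, ⟨hycone, hyn⟩, ?_⟩⟩))
      show N • a - y = x
      rw [hy, sub_sub_cancel]
    obtain ⟨e, he⟩ := hyPV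
    set m : (Fin n → ℤ) → ℕ := fun l => ⌊μ l⌋₊ with hm
    set q : Fin n → ℤ := ∑ l ∈ A.erase a, (m l : ℤ) • (a - l) with hq
    set r : Fin n → ℤ := y - q with hr
    have hqreal : castVec q = ∑ l ∈ A.erase a, (m l : ℝ) • (castVec a - castVec l) := by
      rw [hq, castVec_sum]
      refine Finset.sum_congr rfl (fun l _ => ?_)
      rw [castVec_zsmul, castVec_sub]
      norm_num
    have hrreal : castVec r = ∑ l ∈ A.erase a, (μ l - (m l : ℝ)) • (castVec a - castVec l) := by
      rw [hr, castVec_sub, hyreal, hqreal, ← Finset.add_sum_erase A _ ha,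
        sub_self, smul_zero, zero_add, ← Finset.sum_sub_distrib]
      refine Finset.sum_congr rfl (fun l _ => ?_)
      rw [sub_smul]
    have hθ0 : ∀ l ∈ A, 0 ≤ μ l - (m l : ℝ) :=
      fun l hl => sub_nonneg.mpr (Nat.floor_le (hμ0 l hl))
    have hθ1 : ∀ l ∈ A, μ l - (m l : ℝ) ≤ 1 := by
      intro l hl
      have := Nat.lt_floor_add_one (μ l)
      rw [hm]
      push_cast at this ⊢
      linarith
    have hrbound : ∀ i, |r i| ≤ C i := by
      intro i
      have h1 : ((r i : ℤ) : ℝ) = ∑ l ∈ A.erase a, (μ l - (m l:ℝ)) * ((a i : ℝ) - (l i : ℝ)) := by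
        have h0' := congrFun hrreal i
        simpa [castVec, Finset.sum_apply, Pi.smul_apply, Pi.sub_apply, smul_eq_mul] using h0'
      have h2 : |((r i : ℤ) : ℝ)| ≤ ((C i : ℤ) : ℝ) := by
        rw [h1]
        calc |∑ l ∈ A.erase a, (μ l - (m l:ℝ)) * ((a i : ℝ) - (l i : ℝ))|
            ≤ ∑ l ∈ A.erase a, |(μ l - (m l:ℝ)) * ((a i : ℝ) - (l i : ℝ))| :=
              Finset.abs_sum_le_sum_abs _ _
          _ ≤ ∑ l ∈ A.erase a, |(a i : ℝ) - (l i : ℝ)| := by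
              refine Finset.sum_le_sum (fun l hl => ?_)
              have hlA := Finset.mem_of_mem_erase hl
              rw [abs_mul, abs_of_nonneg (hθ0 l hlA)]
              exact mul_le_of_le_one_left (abs_nonneg _) (hθ1 l hlA)
          _ ≤ ∑ l ∈ A, |(a i : ℝ) - (l i : ℝ)| :=
              Finset.sum_le_sum_of_subset_of_nonneg (Finset.erase_subset a A)
                (fun l _ _ => abs_nonneg _)
          _ ≤ ∑ p ∈ A, ∑ l ∈ A, |(p i : ℝ) - (l i : ℝ)| :=
              Finset.single_le_sum
                (f := fun p => ∑ l ∈ A, |(p i : ℝ) - (l i : ℝ)|)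
                (fun p _ => Finset.sum_nonneg (fun l _ => abs_nonneg _)) ha
          _ = ((C i : ℤ) : ℝ) := by
              rw [hC]
              push_cast
              rfl
      have h3 : |r i| ≤ C i := by exact_mod_cast (abs_le.mpr (abs_le.mp h2))
      exact h3
    have hrR : r ∈ R₀ := by
      rw [hR₀, Finset.mem_Icc]
      constructor
      · intro i
        have := abs_le.mp (hrbound i)
        simpa using this.1
      · intro i
        exact (abs_le.mp (hrbound i)).2
    set mhat : ↥A → ℕ := fun l => if (l : Fin n → ℤ) = a then 0 else m l with hmhat
    set ehat : ↥A → ℕ := fun l => e (a - (l : Fin n → ℤ)) with hehat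
    set z₀ : (↥A × Bool) → ℕ := fun p => if p.2 then ehat p.1 else mhat p.1 with hz₀
    have hqe : ∑ l ∈ A.attach, (mhat l : ℤ) • (a - (l : Fin n → ℤ)) = q := by
      rw [show (fun l : ↥A => (mhat l : ℤ) • (a - (l : Fin n → ℤ))) =
          (fun l : ↥A => ((if (l : Fin n → ℤ) = a then 0 else m (l : Fin n → ℤ) : ℕ) : ℤ) •
            (a - (l : Fin n → ℤ))) from rfl]
      rw [Finset.sum_attach A
        (fun v => ((if v = a then 0 else m v : ℕ) : ℤ) • (a - v))]
      rw [← Finset.add_sum_erase A _ ha, if_pos rfl]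
      simp only [Nat.cast_zero, zero_smul, zero_add]
      exact Finset.sum_congr rfl (fun v hv => by rw [if_neg (Finset.ne_of_mem_erase hv)])
    have hye : ∑ l ∈ A.attach, (ehat l : ℤ) • (a - (l : Fin n → ℤ)) = y := by
      rw [Finset.sum_attach A (fun v => (e (a - v) : ℤ) • (a - v)), ← he, hBa,
        Finset.sum_image hainjA]
    have hz₀Z : z₀ ∈ Z a r := by
      show ∑ l ∈ A.attach, ((z₀ (l, true) : ℤ) - (z₀ (l, false) : ℤ)) • (a - (l : Fin n → ℤ)) = r
      have hterm : ∀ l ∈ A.attach,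
          ((z₀ (l, true) : ℤ) - (z₀ (l, false) : ℤ)) • (a - (l : Fin n → ℤ)) =
          (ehat l : ℤ) • (a - (l : Fin n → ℤ)) - (mhat l : ℤ) • (a - (l : Fin n → ℤ)) := by
        intro l _
        rw [hz₀]
        norm_num [sub_smul]
      rw [Finset.sum_congr rfl hterm, Finset.sum_sub_distrib, hye, hqe, hr]
    obtain ⟨z', hz'Z, hz'le, hz'K⟩ := hK a r z₀ hz₀Z
    set p : ↥A → ℕ := fun l => z' (l, true) with hp
    set q' : ↥A → ℕ := fun l => z' (l, false) with hq'
    have hq'le : ∀ l, q' l ≤ mhat l := fun l => hz'le (l, false)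
    set d : ↥A → ℕ := fun l => (mhat l - q' l) + p l with hd
    set D : ℕ := ∑ l ∈ A.attach, d l with hD
    have hdy : ∑ l ∈ A.attach, (d l : ℤ) • (a - (l : Fin n → ℤ)) = y := by
      have hterm : ∀ l ∈ A.attach, (d l : ℤ) • (a - (l : Fin n → ℤ)) =
          (mhat l : ℤ) • (a - (l : Fin n → ℤ)) +
            ((p l : ℤ) - (q' l : ℤ)) • (a - (l : Fin n → ℤ)) := by
        intro l _
        have h1 : (d l : ℤ) = (mhat l : ℤ) + ((p l : ℤ) - (q' l : ℤ)) := by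
          have := hq'le l
          rw [hd]
          push_cast [this]
          ring
        rw [h1, add_smul]
      have hz'r : ∑ l ∈ A.attach,
          ((z' (l, true) : ℤ) - (z' (l, false) : ℤ)) • (a - (l : Fin n → ℤ)) = r := hz'Z
      rw [Finset.sum_congr rfl hterm, Finset.sum_add_distrib, hqe]
      rw [show (fun l : ↥A => ((p l : ℤ) - (q' l : ℤ)) • (a - (l : Fin n → ℤ))) =
        (fun l : ↥A => ((z' (l, true) : ℤ) - (z' (l, false) : ℤ)) • (a - (l : Fin n → ℤ)))
        from rfl, hz'r, hr]
      abel
    have hKbound : K a r ≤ Ktot :=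
      le_trans (Finset.le_sup (f := K a) hrR)
        (Finset.le_sup (f := fun a => R₀.sup (K a)) ha)
    have hmhatsum : ∑ l ∈ A.attach, mhat l = ∑ l ∈ A.erase a, m l := by
      rw [show (fun l : ↥A => mhat l) =
          (fun l : ↥A => (if (l : Fin n → ℤ) = a then 0 else m (l : Fin n → ℤ))) from rfl]
      rw [Finset.sum_attach A (fun v => if v = a then 0 else m v)]
      rw [← Finset.add_sum_erase A _ ha, if_pos rfl, zero_add]
      exact Finset.sum_congr rfl (fun v hv => by rw [if_neg (Finset.ne_of_mem_erase hv)])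
    have hDle : D ≤ ∑ l ∈ A.erase a, m l + A.card * Ktot := by
      rw [hD, ← hmhatsum]
      have hp_le : ∑ l ∈ A.attach, p l ≤ A.card * Ktot := by
        have h1 : ∑ l ∈ A.attach, p l ≤ A.attach.card • Ktot :=
          Finset.sum_le_card_nsmul _ _ _ (fun l _ => le_trans (hz'K (l, true)) hKbound)
        rw [Finset.card_attach, smul_eq_mul] at h1
        exact h1
      calc ∑ l ∈ A.attach, d l ≤ ∑ l ∈ A.attach, (mhat l + p l) :=
            Finset.sum_le_sum (fun l _ => by show mhat l - q' l + p l ≤ mhat l + p l; omega)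
        _ = ∑ l ∈ A.attach, mhat l + ∑ l ∈ A.attach, p l := Finset.sum_add_distrib
        _ ≤ ∑ l ∈ A.attach, mhat l + A.card * Ktot := by omega
    have hmsumreal : ((∑ l ∈ A.erase a, m l : ℕ) : ℝ) ≤ (N:ℝ) - μ a := by
      push_cast
      calc ∑ l ∈ A.erase a, (m l : ℝ) ≤ ∑ l ∈ A.erase a, μ l :=
          Finset.sum_le_sum (fun l hl => Nat.floor_le (hμ0 l (Finset.mem_of_mem_erase hl)))
        _ = (N:ℝ) - μ a := by
          rw [← hμsum, ← Finset.add_sum_erase A μ ha]; ring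
    have hDNR : (D:ℝ) ≤ (N:ℝ) := by
      have h1 : (D:ℝ) ≤ ((∑ l ∈ A.erase a, m l : ℕ) : ℝ) + (A.card : ℝ) * Ktot := by
        have := hDle
        push_cast
        exact_mod_cast this
      have hNlarge : (A.card:ℝ) * (A.card:ℝ) * (Ktot:ℝ) + 1 ≤ (N:ℝ) := by
        exact_mod_cast hN
      have hcardR : (0:ℝ) < (A.card : ℝ) := by exact_mod_cast hcard_pos
      have hca : (A.card:ℝ) * ((A.card:ℝ) * (Ktot:ℝ)) < (A.card:ℝ) * μ a :=
        lt_of_lt_of_le (by nlinarith) hμa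
      have hKμ : (A.card:ℝ) * (Ktot:ℝ) < μ a := (mul_lt_mul_iff_right₀ hcardR).mp hca
      linarith
    have hDN : D ≤ N := by exact_mod_cast hDNR
    set cstar : (Fin n → ℤ) → ℕ :=
      fun v => if h : v ∈ A then d ⟨v, h⟩ + (if v = a then N - D else 0) else 0 with hcstar
    have hcst : ∀ l : ↥A, cstar (l : Fin n → ℤ) =
        d l + (if (l : Fin n → ℤ) = a then N - D else 0) := by
      intro l
      rw [hcstar]
      simp only [dif_pos l.2, Subtype.coe_eta]
    have hcount : ∑ v ∈ A, cstar v = N := by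
      rw [← Finset.sum_attach A cstar, Finset.sum_congr rfl (fun l _ => hcst l),
        Finset.sum_add_distrib, ← hD]
      have hite : ∑ l ∈ A.attach, (if (l : Fin n → ℤ) = a then N - D else 0) = N - D := by
        rw [Finset.sum_attach A (fun v => if v = a then N - D else 0),
          Finset.sum_ite_eq' A a (fun _ => N - D), if_pos ha]
      rw [hite]
      omega
    have hvec : ∑ v ∈ A, (cstar v : ℤ) • v = x := by
      rw [← Finset.sum_attach A (fun v => (cstar v : ℤ) • v)]
      have hterm : ∀ l ∈ A.attach, (cstar (l : Fin n → ℤ) : ℤ) • (l : Fin n → ℤ) =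
          (d l : ℤ) • (l : Fin n → ℤ) +
            (if (l : Fin n → ℤ) = a then ((N - D : ℕ) : ℤ) • (l : Fin n → ℤ) else 0) := by
        intro l _
        rw [hcst l]
        by_cases hla : (l : Fin n → ℤ) = a
        · rw [if_pos hla, if_pos hla]
          push_cast
          rw [add_smul]
        · rw [if_neg hla, if_neg hla, add_zero, add_zero]
      rw [Finset.sum_congr rfl hterm, Finset.sum_add_distrib]
      have h2 : ∑ l ∈ A.attach,
          (if (l : Fin n → ℤ) = a then ((N - D : ℕ) : ℤ) • (l : Fin n → ℤ) else 0) =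
          ((N - D : ℕ) : ℤ) • a := by
        rw [Finset.sum_attach A (fun v => if v = a then ((N - D : ℕ) : ℤ) • v else 0),
          Finset.sum_ite_eq' A a (fun v => ((N - D : ℕ) : ℤ) • v), if_pos ha]
      have h1 : ∑ l ∈ A.attach, (d l : ℤ) • (l : Fin n → ℤ) = (D : ℤ) • a - y := by
        have hterm2 : ∀ l ∈ A.attach, (d l : ℤ) • (l : Fin n → ℤ) =
            (d l : ℤ) • a - (d l : ℤ) • (a - (l : Fin n → ℤ)) := by
          intro l _
          rw [smul_sub]
          abel
        rw [Finset.sum_congr rfl hterm2, Finset.sum_sub_distrib, hdy, ← Finset.sum_smul, hD]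
        push_cast
        rfl
      rw [h1, h2]
      have hND : ((N - D : ℕ) : ℤ) = (N : ℤ) - (D : ℤ) := Nat.cast_sub hDN
      rw [hND, hy, sub_smul, ← natCast_zsmul a N]
      abel
    have hfin := mem_nfold_of_count A N cstar hcount
    rw [hvec] at hfin
    exact hfin
end
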